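/- Let F(x,y) ∈ K[x,y] be nonconstant over an algebraically closed field K containing F_q, with F = ∏_{i=1}^r F_i where the F_i are irreducible and pairwise coprime. Then F divides (x^q - x)∂F/∂x + (y^q - y)∂F/∂y if and only if, for every i, F_i divides (x^q - x)∂F_i/∂x + (y^q - y)∂F_i/∂y. -/

import Mathlib

open MvPolynomial

lemma pderiv_prod' {K : Type*} [CommRing K] {ι : Type*} [DecidableEq ι]
    (k : Fin 2) (s : Finset ι) (f : ι → MvPolynomial (Fin 2) K) :
    MvPolynomial.pderiv k (∏ i ∈ s, f i) =
      ∑ i ∈ s, (∏ j ∈ s.erase i, f j) * MvPolynomial.pderiv k (f i) := by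
  induction s using Finset.induction_on with
  | empty => simp
  | insert a s ha ih =>
    rw [Finset.prod_insert ha, pderiv_mul, ih, Finset.sum_insert ha,
      Finset.erase_insert ha, Finset.mul_sum]
    congr 1
    · ring
    · apply Finset.sum_congr rfl
      intro i hi
      rw [Finset.erase_insert_of_ne (by rintro rfl; exact ha hi),
        Finset.prod_insert (fun h => ha (Finset.mem_of_mem_erase h))]
      ring

theorem stmt_7 {Fq K : Type*} [Field Fq] [Fintype Fq] [Field K] [IsAlgClosed K]
    [Algebra Fq K] (q : ℕ) (hq : Fintype.card Fq = q)
    (r : ℕ) (hr : 0 < r) (Fi : Fin r → MvPolynomial (Fin 2) K)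
    (hIrr : ∀ i, Irreducible (Fi i))
    (hcop : ∀ i j, i ≠ j → ¬ (Fi i ∣ Fi j))
    (F : MvPolynomial (Fin 2) K) (hF : F = ∏ i, Fi i) :
    (F ∣ (MvPolynomial.X 0 ^ q - MvPolynomial.X 0) * MvPolynomial.pderiv 0 F +
         (MvPolynomial.X 1 ^ q - MvPolynomial.X 1) * MvPolynomial.pderiv 1 F) ↔
    ∀ i, Fi i ∣ (MvPolynomial.X 0 ^ q - MvPolynomial.X 0) * MvPolynomial.pderiv 0 (Fi i) +
         (MvPolynomial.X 1 ^ q - MvPolynomial.X 1) * MvPolynomial.pderiv 1 (Fi i) := by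
  set d : MvPolynomial (Fin 2) K → MvPolynomial (Fin 2) K := fun G =>
    (MvPolynomial.X 0 ^ q - MvPolynomial.X 0) * MvPolynomial.pderiv 0 G +
      (MvPolynomial.X 1 ^ q - MvPolynomial.X 1) * MvPolynomial.pderiv 1 G with hd
  show F ∣ d F ↔ ∀ i, Fi i ∣ d (Fi i)
  have key : d F = ∑ i, (∏ j ∈ Finset.univ.erase i, Fi j) * d (Fi i) := by
    rw [hd, hF]
    simp only [pderiv_prod', Finset.mul_sum]
    rw [← Finset.sum_add_distrib]
    apply Finset.sum_congr rfl
    intro i _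
    ring
  constructor
  · intro h i
    have hprime : Prime (Fi i) := UniqueFactorizationMonoid.irreducible_iff_prime.mp (hIrr i)
    have h1 : Fi i ∣ d F := dvd_trans (hF ▸ Finset.dvd_prod_of_mem Fi (Finset.mem_univ i)) h
    have h2 : Fi i ∣ ∑ j ∈ Finset.univ.erase i,
        (∏ k ∈ Finset.univ.erase j, Fi k) * d (Fi j) := by
      apply Finset.dvd_sum
      intro j hj
      exact dvd_mul_of_dvd_left
        (Finset.dvd_prod_of_mem Fi (Finset.mem_erase.mpr ⟨Ne.symm (Finset.mem_erase.mp hj).1,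
          Finset.mem_univ i⟩)) _
    have h3 : Fi i ∣ (∏ j ∈ Finset.univ.erase i, Fi j) * d (Fi i) := by
      have h4 : Fi i ∣ (∏ j ∈ Finset.univ.erase i, Fi j) * d (Fi i) +
          ∑ j ∈ Finset.univ.erase i, (∏ k ∈ Finset.univ.erase j, Fi k) * d (Fi j) := by
        rw [Finset.add_sum_erase Finset.univ
          (fun j => (∏ k ∈ Finset.univ.erase j, Fi k) * d (Fi j)) (Finset.mem_univ i), ← key]
        exact h1
      exact (dvd_add_right h2).mp (by rwa [add_comm] at h4)
    rcases hprime.dvd_mul.mp h3 with h5 | h5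
    · exfalso
      obtain ⟨j, hj, hij⟩ := hprime.dvd_finset_prod_iff Fi |>.mp h5
      exact hcop i j (Ne.symm (Finset.mem_erase.mp hj).1) hij
    · exact h5
  · intro h
    rw [key, hF]
    apply Finset.dvd_sum
    intro i _
    obtain ⟨c, hc⟩ := h i
    exact ⟨c, by rw [hc, ← Finset.prod_erase_mul _ _ (Finset.mem_univ i)]; ring⟩
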